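/- Let ⟨g_β : β < α⟩ be a sequence of permutations of ω such that for every finite subsequence β₁ < ⋯ < β_n < α, the set C(β₁,…,β_n) = {φ ∈ Sym(ω) : ⟨g_{β₁},…,g_{β_n}⟩⌢φ is generic} is comeagre in Sym(ω). Then for every h ∈ Sym(ω) and every φ in the comeagre set ⋂ over finite subsequences of h^{-1}C(β₁,…,β_n) ∩ C(β₁,…,β_n), both ⟨g_β : β<α⟩⌢φ and ⟨g_β : β<α⟩⌢(hφ) are generic sequences. In particular, if α is countable then such φ exists. -/

import Mathlib

/-- The Polish topology of pointwise convergence on `Sym(ω)`, inherited from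
the Baire space `ω^ω`. -/
noncomputable instance permTop : TopologicalSpace (Equiv.Perm ℕ) :=
  TopologicalSpace.induced (fun g : Equiv.Perm ℕ => (g : ℕ → ℕ)) inferInstance

/-- A finite tuple `⟨g 0, …, g (n-1)⟩` of permutations of `ω` is *generic* if
(1) every finite `A ⊆ ω` extends to a finite `B` invariant under all `g i`, and
(2) whenever `A` is finite and invariant under all `g i`, `A ⊆ B` finite, and
`h i ∈ Sym(B)` extends `g i ↾ A` for each `i`, then there is `π ∈ Sym(ω)`
fixing `A` pointwise with `π * g i * π⁻¹` extending `h i` for all `i`. -/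
def IsGenericTuple {n : ℕ} (g : Fin n → Equiv.Perm ℕ) : Prop :=
  (∀ A : Finset ℕ, ∃ B : Finset ℕ, A ⊆ B ∧ ∀ i, B.image (g i) = B) ∧
  (∀ A B : Finset ℕ, A ⊆ B → (∀ i, A.image (g i) = A) →
    ∀ h : Fin n → Equiv.Perm ℕ,
      (∀ i, B.image (h i) = B) → (∀ i, ∀ x ∉ B, h i x = x) →
      (∀ i, ∀ a ∈ A, h i a = g i a) →
      ∃ π : Equiv.Perm ℕ, (∀ a ∈ A, π a = a) ∧
        ∀ i, ∀ b ∈ B, (π * g i * π⁻¹) b = h i b)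

/-- A transfinite sequence `⟨g β : β < α⟩` of permutations is *generic* if
every finite (strictly increasing) subsequence is a generic tuple. -/
def IsGenericSeq (α : Ordinal) (g : Ordinal → Equiv.Perm ℕ) : Prop :=
  ∀ (n : ℕ) (s : Fin n → Ordinal), StrictMono s → (∀ k, s k < α) →
    IsGenericTuple (fun k => g (s k))

namespace Stmt9Aux

instance : Nonempty (Equiv.Perm ℕ) := ⟨1⟩

lemma continuous_coe : Continuous (fun g : Equiv.Perm ℕ => (g : ℕ → ℕ)) :=
  continuous_induced_dom

lemma isOpen_eval (n m : ℕ) : IsOpen {g : Equiv.Perm ℕ | g n = m} := by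
  have h : {g : Equiv.Perm ℕ | g n = m} =
      (fun g : Equiv.Perm ℕ => (g : ℕ → ℕ) n) ⁻¹' {m} := rfl
  rw [h]
  exact (((continuous_apply n).comp continuous_coe)).isOpen_preimage _ (isOpen_discrete _)

lemma continuous_invcoe :
    Continuous (fun g : Equiv.Perm ℕ => ((g⁻¹ : Equiv.Perm ℕ) : ℕ → ℕ)) := by
  apply continuous_pi
  intro m
  rw [continuous_discrete_rng]
  intro n
  have h : (fun g : Equiv.Perm ℕ => (g⁻¹ : Equiv.Perm ℕ) m) ⁻¹' {n} =
      {g : Equiv.Perm ℕ | g n = m} := by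
    ext g
    simp only [Set.mem_preimage, Set.mem_singleton_iff, Set.mem_setOf_eq]
    constructor
    · rintro rfl; exact Equiv.apply_symm_apply g m
    · rintro rfl; exact Equiv.symm_apply_apply g n
  rw [h]
  exact isOpen_eval n m

/-- The two-sided graph embedding `g ↦ (g, g⁻¹)`. -/
def iota (g : Equiv.Perm ℕ) : (ℕ → ℕ) × (ℕ → ℕ) :=
  ((g : ℕ → ℕ), ((g⁻¹ : Equiv.Perm ℕ) : ℕ → ℕ))

lemma continuous_iota : Continuous iota :=
  continuous_coe.prodMk continuous_invcoe

lemma continuous_evalFst (n : ℕ) : Continuous fun p : (ℕ → ℕ) × (ℕ → ℕ) => p.1 n :=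
  (continuous_apply n).comp continuous_fst

lemma continuous_evalSnd (n : ℕ) : Continuous fun p : (ℕ → ℕ) × (ℕ → ℕ) => p.2 n :=
  (continuous_apply n).comp continuous_snd

lemma isOpen_pair₁ (n c : ℕ) : IsOpen {p : (ℕ → ℕ) × (ℕ → ℕ) | p.1 n = c} :=
  (continuous_evalFst n).isOpen_preimage ({c} : Set ℕ) (isOpen_discrete _)

lemma isOpen_pair₂ (n : ℕ) (s : Set ℕ) : IsOpen {p : (ℕ → ℕ) × (ℕ → ℕ) | p.2 n ∈ s} :=
  (continuous_evalSnd n).isOpen_preimage s (isOpen_discrete _)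

lemma isOpen_pair₁' (n : ℕ) (s : Set ℕ) : IsOpen {p : (ℕ → ℕ) × (ℕ → ℕ) | p.1 n ∈ s} :=
  (continuous_evalFst n).isOpen_preimage s (isOpen_discrete _)

lemma isOpen_pair₂eq (n c : ℕ) : IsOpen {p : (ℕ → ℕ) × (ℕ → ℕ) | p.2 n = c} :=
  (continuous_evalSnd n).isOpen_preimage ({c} : Set ℕ) (isOpen_discrete _)

lemma isClosed_comp₂ (n : ℕ) : IsClosed {p : (ℕ → ℕ) × (ℕ → ℕ) | p.2 (p.1 n) = n} := by
  rw [← isOpen_compl_iff]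
  have h : {p : (ℕ → ℕ) × (ℕ → ℕ) | p.2 (p.1 n) = n}ᶜ =
      ⋃ c, {p : (ℕ → ℕ) × (ℕ → ℕ) | p.1 n = c} ∩ {p | p.2 c ∈ ({n} : Set ℕ)ᶜ} := by
    ext p
    simp only [Set.mem_compl_iff, Set.mem_setOf_eq, Set.mem_iUnion, Set.mem_inter_iff,
      Set.mem_singleton_iff]
    constructor
    · intro hp; exact ⟨p.1 n, rfl, hp⟩
    · rintro ⟨c, rfl, hp⟩; exact hp
  rw [h]
  exact isOpen_iUnion fun c => (isOpen_pair₁ n c).inter (isOpen_pair₂ c _)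

lemma isClosed_comp₁ (n : ℕ) : IsClosed {p : (ℕ → ℕ) × (ℕ → ℕ) | p.1 (p.2 n) = n} := by
  rw [← isOpen_compl_iff]
  have h : {p : (ℕ → ℕ) × (ℕ → ℕ) | p.1 (p.2 n) = n}ᶜ =
      ⋃ c, {p : (ℕ → ℕ) × (ℕ → ℕ) | p.2 n = c} ∩ {p | p.1 c ∈ ({n} : Set ℕ)ᶜ} := by
    ext p
    simp only [Set.mem_compl_iff, Set.mem_setOf_eq, Set.mem_iUnion, Set.mem_inter_iff,
      Set.mem_singleton_iff]
    constructor
    · intro hp; exact ⟨p.2 n, rfl, hp⟩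
    · rintro ⟨c, rfl, hp⟩; exact hp
  rw [h]
  exact isOpen_iUnion fun c => (isOpen_pair₂eq n c).inter (isOpen_pair₁' c _)

lemma range_iota : Set.range iota =
    ⋂ n, ({p : (ℕ → ℕ) × (ℕ → ℕ) | p.2 (p.1 n) = n} ∩ {p | p.1 (p.2 n) = n}) := by
  ext p
  simp only [Set.mem_range, Set.mem_iInter, Set.mem_inter_iff, Set.mem_setOf_eq]
  constructor
  · rintro ⟨g, rfl⟩ n
    exact ⟨Equiv.symm_apply_apply g n, Equiv.apply_symm_apply g n⟩
  · intro hp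
    exact ⟨⟨p.1, p.2, fun x => (hp x).1, fun x => (hp x).2⟩, rfl⟩

lemma isClosedEmbedding_iota : Topology.IsClosedEmbedding iota := by
  refine ⟨⟨Topology.IsInducing.of_comp continuous_iota continuous_fst ⟨rfl⟩, ?_⟩, ?_⟩
  · intro a b hab
    exact Equiv.ext fun x => congrFun (congrArg Prod.fst hab) x
  · rw [range_iota]
    exact isClosed_iInter fun n => (isClosed_comp₂ n).inter (isClosed_comp₁ n)

instance : PolishSpace (Equiv.Perm ℕ) := by
  haveI : PolishSpace ((ℕ → ℕ) × (ℕ → ℕ)) := inferInstance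
  exact isClosedEmbedding_iota.polishSpace

instance : BaireSpace (Equiv.Perm ℕ) := by
  letI := TopologicalSpace.upgradeIsCompletelyMetrizable (Equiv.Perm ℕ)
  exact BaireSpace.of_completelyPseudoMetrizable

lemma continuous_mulLeft (h : Equiv.Perm ℕ) :
    Continuous (fun φ : Equiv.Perm ℕ => h * φ) := by
  rw [continuous_induced_rng]
  have he : ((fun g : Equiv.Perm ℕ => (g : ℕ → ℕ)) ∘ fun φ : Equiv.Perm ℕ => h * φ) =
      fun φ : Equiv.Perm ℕ => (h : ℕ → ℕ) ∘ (φ : ℕ → ℕ) := rfl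
  rw [he]
  exact continuous_pi fun n =>
    (continuous_of_discreteTopology (f := (h : ℕ → ℕ))).comp
      ((continuous_apply n).comp continuous_coe)

/-- Left translation as a homeomorphism of `Sym(ω)`. -/
def mulLeftHomeo (h : Equiv.Perm ℕ) : Equiv.Perm ℕ ≃ₜ Equiv.Perm ℕ where
  toFun φ := h * φ
  invFun φ := h⁻¹ * φ
  left_inv φ := by simp [← mul_assoc]
  right_inv φ := by simp [← mul_assoc]
  continuous_toFun := continuous_mulLeft h
  continuous_invFun := continuous_mulLeft h⁻¹

lemma isGδ_preimage {X Y : Type*} [TopologicalSpace X] [TopologicalSpace Y] {f : X → Y}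
    (hf : Continuous f) {s : Set Y} (hs : IsGδ s) : IsGδ (f ⁻¹' s) := by
  obtain ⟨T, hTo, hTc, rfl⟩ := hs
  rw [Set.preimage_sInter]
  exact IsGδ.biInter hTc fun t ht => ((hTo t ht).preimage hf).isGδ

lemma residual_preimage_mulLeft (h : Equiv.Perm ℕ) {s : Set (Equiv.Perm ℕ)}
    (hs : s ∈ residual (Equiv.Perm ℕ)) :
    (fun φ : Equiv.Perm ℕ => h * φ) ⁻¹' s ∈ residual (Equiv.Perm ℕ) := by
  rw [mem_residual] at hs ⊢
  obtain ⟨t, hts, htGδ, htd⟩ := hs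
  refine ⟨(fun φ : Equiv.Perm ℕ => h * φ) ⁻¹' t, Set.preimage_mono hts,
    isGδ_preimage (continuous_mulLeft h) htGδ, ?_⟩
  have him : (fun φ : Equiv.Perm ℕ => h * φ) ⁻¹' t = (mulLeftHomeo h⁻¹) '' t := by
    ext φ
    simp only [Set.mem_preimage, Set.mem_image]
    constructor
    · intro hφ; exact ⟨h * φ, hφ, by simp [mulLeftHomeo, ← mul_assoc]⟩
    · rintro ⟨ψ, hψ, rfl⟩
      simpa [mulLeftHomeo, ← mul_assoc] using hψ
  rw [him]
  exact ((mulLeftHomeo h⁻¹).isDenseEmbedding.dense_image).mpr htd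

/-- The empty tuple is generic. -/
lemma isGenericTuple_fin_zero (g : Fin 0 → Equiv.Perm ℕ) : IsGenericTuple g :=
  ⟨fun A => ⟨A, subset_rfl, fun i => i.elim0⟩,
   fun A B _ _ h _ _ _ => ⟨1, fun a _ => rfl, fun i => i.elim0⟩⟩

/-- If comeagrely many `ψ` make `g⌢ψ` generic, then `g` itself is generic. -/
lemma isGenericTuple_of_residual {n : ℕ} (g : Fin n → Equiv.Perm ℕ)
    (H : {ψ : Equiv.Perm ℕ | IsGenericTuple (Fin.snoc g ψ)} ∈ residual (Equiv.Perm ℕ)) :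
    IsGenericTuple g := by
  constructor
  · intro A
    obtain ⟨ψ, hψ⟩ := (dense_of_mem_residual H).nonempty
    obtain ⟨B, hAB, hB⟩ := hψ.1 A
    refine ⟨B, hAB, fun i => ?_⟩
    have := hB i.castSucc
    rwa [Fin.snoc_castSucc] at this
  · intro A B hAB hAinv h hB hBout hAagree
    set U : Set (Equiv.Perm ℕ) := ⋂ x ∈ B, {ψ : Equiv.Perm ℕ | ψ x = x} with hU
    have hUopen : IsOpen U := isOpen_biInter_finset fun x _ => isOpen_eval x x
    have h1U : (1 : Equiv.Perm ℕ) ∈ U := by simp [hU]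
    obtain ⟨ψ, hψS, hψU⟩ := (dense_of_mem_residual H).exists_mem_open hUopen ⟨1, h1U⟩
    have hψfix : ∀ x ∈ B, ψ x = x := fun x hx => Set.mem_iInter₂.mp hψU x hx
    have hAinv' : ∀ i, A.image ((Fin.snoc g ψ : Fin (n+1) → Equiv.Perm ℕ) i) = A := by
      intro i
      induction i using Fin.lastCases with
      | last =>
        rw [Fin.snoc_last]
        have himg : A.image (ψ : ℕ → ℕ) = A.image id :=
          Finset.image_congr fun a ha => hψfix a (hAB ha)
        rw [himg, Finset.image_id]
      | cast j => rw [Fin.snoc_castSucc]; exact hAinv j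
    have hB' : ∀ i, B.image ((Fin.snoc h 1 : Fin (n+1) → Equiv.Perm ℕ) i) = B := by
      intro i
      induction i using Fin.lastCases with
      | last =>
        rw [Fin.snoc_last]
        have himg : B.image ((1 : Equiv.Perm ℕ) : ℕ → ℕ) = B.image id :=
          Finset.image_congr fun b _ => rfl
        rw [himg, Finset.image_id]
      | cast j => rw [Fin.snoc_castSucc]; exact hB j
    have hBout' : ∀ i, ∀ x ∉ B, (Fin.snoc h 1 : Fin (n+1) → Equiv.Perm ℕ) i x = x := by
      intro i
      induction i using Fin.lastCases with
      | last => intro x _; rw [Fin.snoc_last]; rfl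
      | cast j => rw [Fin.snoc_castSucc]; exact hBout j
    have hAagree' : ∀ i, ∀ a ∈ A, (Fin.snoc h 1 : Fin (n+1) → Equiv.Perm ℕ) i a =
        (Fin.snoc g ψ : Fin (n+1) → Equiv.Perm ℕ) i a := by
      intro i
      induction i using Fin.lastCases with
      | last =>
        intro a ha
        rw [Fin.snoc_last, Fin.snoc_last]
        exact (hψfix a (hAB ha)).symm
      | cast j =>
        intro a ha
        rw [Fin.snoc_castSucc, Fin.snoc_castSucc]
        exact hAagree j a ha
    obtain ⟨π, hπfix, hπconj⟩ := hψS.2 A B hAB hAinv' (Fin.snoc h 1) hB' hBout' hAagree'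
    refine ⟨π, hπfix, fun i b hb => ?_⟩
    have := hπconj i.castSucc b hb
    rwa [Fin.snoc_castSucc, Fin.snoc_castSucc] at this

/-- Appending a suitable `φ` at position `α` yields a generic sequence. -/
lemma seq_of_tuples (α : Ordinal) (g : Ordinal → Equiv.Perm ℕ)
    (hcom : ∀ (n : ℕ) (s : Fin n → Ordinal), StrictMono s → (∀ k, s k < α) →
      {φ : Equiv.Perm ℕ | IsGenericTuple (Fin.snoc (fun k => g (s k)) φ)} ∈
        residual (Equiv.Perm ℕ))
    (φ : Equiv.Perm ℕ)
    (hyp : ∀ (n : ℕ) (s : Fin n → Ordinal), StrictMono s → (∀ k, s k < α) →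
      IsGenericTuple (Fin.snoc (fun k => g (s k)) φ)) :
    IsGenericSeq (α + 1) (fun β => if β = α then φ else g β) := by
  intro n s hs hlt
  have hle : ∀ k, s k ≤ α := fun k => by
    have := hlt k
    rwa [Ordinal.add_one_eq_succ, Order.lt_succ_iff] at this
  cases n with
  | zero => exact isGenericTuple_fin_zero _
  | succ m =>
    by_cases hlast : s (Fin.last m) = α
    · have hlt' : ∀ k : Fin m, s k.castSucc < α := fun k => by
        rw [← hlast]; exact hs (Fin.castSucc_lt_last k)
      have he : (fun k => if s k = α then φ else g (s k)) =
          Fin.snoc (fun k : Fin m => g (s k.castSucc)) φ := by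
        funext k
        induction k using Fin.lastCases with
        | last => rw [Fin.snoc_last, if_pos hlast]
        | cast j => rw [Fin.snoc_castSucc, if_neg (hlt' j).ne]
      rw [he]
      exact hyp m (fun k => s k.castSucc)
        (fun a b hab => hs (Fin.castSucc_lt_castSucc_iff.mpr hab)) hlt'
    · have hltall : ∀ k, s k < α := fun k =>
        lt_of_le_of_lt (hs.monotone (Fin.le_last k)) (lt_of_le_of_ne (hle _) hlast)
      have he : (fun k => if s k = α then φ else g (s k)) = fun k => g (s k) :=
        funext fun k => if_neg (hltall k).ne
      rw [he]
      exact isGenericTuple_of_residual _ (hcom _ s hs hltall)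

end Stmt9Aux

/-- Lemma 3.14-style statement: if each set
`C(β₁,…,βₙ) = {φ : ⟨g_{β₁},…,g_{βₙ}⟩⌢φ is generic}` is comeagre, then any `φ`
lying in every `h⁻¹C(β₁,…,βₙ) ∩ C(β₁,…,βₙ)` makes both `⟨g_β⟩⌢φ` and
`⟨g_β⟩⌢(hφ)` generic sequences; and if `α` is countable such a `φ` exists. -/
theorem stmt_9 (α : Ordinal) (g : Ordinal → Equiv.Perm ℕ)
    (hcom : ∀ (n : ℕ) (s : Fin n → Ordinal), StrictMono s → (∀ k, s k < α) →
      {φ : Equiv.Perm ℕ | IsGenericTuple (Fin.snoc (fun k => g (s k)) φ)} ∈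
        residual (Equiv.Perm ℕ)) :
    (∀ h φ : Equiv.Perm ℕ,
      (∀ (n : ℕ) (s : Fin n → Ordinal), StrictMono s → (∀ k, s k < α) →
        IsGenericTuple (Fin.snoc (fun k => g (s k)) φ) ∧
        IsGenericTuple (Fin.snoc (fun k => g (s k)) (h * φ))) →
      IsGenericSeq (α + 1) (fun β => if β = α then φ else g β) ∧
      IsGenericSeq (α + 1) (fun β => if β = α then h * φ else g β)) ∧
    (α.card ≤ Cardinal.aleph0 → ∀ h : Equiv.Perm ℕ, ∃ φ : Equiv.Perm ℕ,
      ∀ (n : ℕ) (s : Fin n → Ordinal), StrictMono s → (∀ k, s k < α) →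
        IsGenericTuple (Fin.snoc (fun k => g (s k)) φ) ∧
        IsGenericTuple (Fin.snoc (fun k => g (s k)) (h * φ))) := by
  constructor
  · intro h φ hyp
    exact ⟨Stmt9Aux.seq_of_tuples α g hcom φ (fun n s h1 h2 => (hyp n s h1 h2).1),
           Stmt9Aux.seq_of_tuples α g hcom (h * φ) (fun n s h1 h2 => (hyp n s h1 h2).2)⟩
  · intro hcard h
    classical
    have hcnt : (Set.Iio α).Countable := by
      rw [← Cardinal.le_aleph0_iff_set_countable, Ordinal.mk_Iio_ordinal]
      exact Cardinal.lift_le_aleph0.mpr hcard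
    haveI : Countable (Set.Iio α) := hcnt.to_subtype
    set S : (Σ n : ℕ, Fin n → Set.Iio α) → Set (Equiv.Perm ℕ) := fun σ =>
      {φ : Equiv.Perm ℕ | IsGenericTuple (Fin.snoc (fun k => g (σ.2 k).1) φ)} with hS
    set D : (Σ n : ℕ, Fin n → Set.Iio α) → Set (Equiv.Perm ℕ) := fun σ =>
      if StrictMono (fun k => (σ.2 k).1) then
        S σ ∩ (fun φ : Equiv.Perm ℕ => h * φ) ⁻¹' S σ
      else Set.univ with hD
    have hDres : ∀ σ, D σ ∈ residual (Equiv.Perm ℕ) := by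
      intro σ
      rw [hD]
      dsimp only
      split_ifs with hmono
      · exact Filter.inter_mem (hcom _ _ hmono fun k => (σ.2 k).2)
          (Stmt9Aux.residual_preimage_mulLeft h (hcom _ _ hmono fun k => (σ.2 k).2))
      · exact Filter.univ_mem
    have hint : (⋂ σ, D σ) ∈ residual (Equiv.Perm ℕ) := countable_iInter_mem.mpr hDres
    obtain ⟨φ, hφ⟩ := (dense_of_mem_residual hint).nonempty
    refine ⟨φ, fun n s hsm hlt => ?_⟩
    have hmem := Set.mem_iInter.mp hφ ⟨n, fun k => ⟨s k, hlt k⟩⟩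
    rw [hD] at hmem
    dsimp only at hmem
    rw [if_pos (show StrictMono (fun k : Fin n =>
      ((⟨s k, hlt k⟩ : Set.Iio α) : Ordinal)) from hsm)] at hmem
    exact ⟨hmem.1, hmem.2⟩
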